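/- arXiv:math/0210306 — 3 statements merged into one kernel-verified Lean document; each statement's English description precedes it below -/
import Mathlib

section
/- Let f be a holomorphic map from the open unit disc D into itself whose image f(D) is contained in a compact subset K of D. Then there exists λ < 1 (depending only on K) such that for all x, y in D, the hyperbolic distance between f(x) and f(y) is at most λ times the hyperbolic distance between x and y. -/
open Real

lemma myHasDerivAt_tanh (x : ℝ) : HasDerivAt Real.tanh (1 / Real.cosh x ^ 2) x := by
  have h := (Real.hasDerivAt_sinh x).div (Real.hasDerivAt_cosh x) (Real.cosh_pos x).ne'
  have he : Real.tanh = fun y => Real.sinh y / Real.cosh y := by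
    funext y; exact Real.tanh_eq_sinh_div_cosh y
  rw [he]
  refine h.congr_deriv ?_
  have := Real.cosh_sq_sub_sinh_sq x
  rw [show cosh x * cosh x - sinh x * sinh x = 1 by nlinarith]

lemma myTanh_strictMono : StrictMono Real.tanh :=
  strictMono_of_deriv_pos fun x => by
    rw [(myHasDerivAt_tanh x).deriv]; positivity

lemma myTanh_lt_one (x : ℝ) : Real.tanh x < 1 := by
  rw [Real.tanh_eq_sinh_div_cosh, div_lt_one (Real.cosh_pos x)]
  nlinarith [Real.cosh_sub_sinh x, Real.exp_pos (-x)]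

lemma myTanh_nonneg {x : ℝ} (hx : 0 ≤ x) : 0 ≤ Real.tanh x := by
  simpa using myTanh_strictMono.monotone hx

lemma myMul_tanh_le {l t : ℝ} (hl0 : 0 ≤ l) (hl1 : l ≤ 1) (ht : 0 ≤ t) :
    l * Real.tanh t ≤ Real.tanh (l * t) := by
  set F : ℝ → ℝ := fun s => Real.tanh (l * s) - l * Real.tanh s with hF
  have hder : ∀ s : ℝ, HasDerivAt F (l * (1 / Real.cosh (l * s) ^ 2) - l * (1 / Real.cosh s ^ 2)) s := by
    intro s
    have hlin : HasDerivAt (fun y : ℝ => l * y) l s := by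
      simpa using (hasDerivAt_id s).const_mul l
    have h1 : HasDerivAt (fun s : ℝ => Real.tanh (l * s)) (1 / Real.cosh (l * s) ^ 2 * l) s :=
      (myHasDerivAt_tanh (l * s)).comp s hlin
    have h2 := (myHasDerivAt_tanh s).const_mul l
    exact (h1.sub h2).congr_deriv (by ring)
  have hmono : MonotoneOn F (Set.Ici (0 : ℝ)) := by
    apply monotoneOn_of_deriv_nonneg (convex_Ici 0)
    · exact fun s _ => ((hder s).continuousAt).continuousWithinAt
    · exact fun s _ => ((hder s).differentiableAt).differentiableWithinAt
    · intro s hs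
      rw [(hder s).deriv]
      have hs0 : 0 ≤ s := le_of_lt (by simpa using hs)
      have : Real.cosh (l * s) ≤ Real.cosh s := by
        rw [Real.cosh_le_cosh]
        rw [abs_of_nonneg hs0, abs_of_nonneg (by positivity)]
        nlinarith
      have hc1 : 0 < Real.cosh (l * s) := Real.cosh_pos _
      have hc2 : 0 < Real.cosh s := Real.cosh_pos _
      have : 1 / Real.cosh s ^ 2 ≤ 1 / Real.cosh (l * s) ^ 2 := by
        apply one_div_le_one_div_of_le (by positivity)
        nlinarith
      nlinarith
  have h0 : F 0 = 0 := by simp [hF]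
  have := hmono (Set.self_mem_Ici) (Set.mem_Ici.2 ht) ht
  rw [h0] at this
  simp only [hF] at this
  linarith
open UpperHalfPlane Complex

lemma mySub_conj_ne (z b : ℍ) : (z : ℂ) - (starRingEnd ℂ) (b : ℂ) ≠ 0 := by
  intro h
  have h1 : ((z : ℂ) - (starRingEnd ℂ) (b : ℂ)).im = 0 := by rw [h]; simp
  simp only [Complex.sub_im, Complex.conj_im] at h1
  nlinarith [z.im_pos, b.im_pos, UpperHalfPlane.coe_im z, UpperHalfPlane.coe_im b]

lemma myPsi_im_pos (x : ℍ) (w : ℂ) (hw : ‖w‖ < 1) :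
    0 < (((x : ℂ) - (starRingEnd ℂ) (x : ℂ) * w) / (1 - w)).im := by
  have hw2 : w.re ^ 2 + w.im ^ 2 < 1 := by
    have h := Complex.sq_norm w
    rw [Complex.normSq_apply] at h
    nlinarith [norm_nonneg w]
  have hd : (1 : ℂ) - w ≠ 0 := by
    intro h
    have : ‖1 - w‖ = 0 := by rw [h]; simp
    have h1 : (1:ℝ) ≤ ‖w‖ + ‖1 - w‖ := by
      calc (1:ℝ) = ‖w + (1 - w)‖ := by norm_num
      _ ≤ ‖w‖ + ‖1 - w‖ := norm_add_le _ _
    linarith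
  have hN : 0 < Complex.normSq (1 - w) := Complex.normSq_pos.2 hd
  rw [Complex.div_im]
  rw [div_sub_div_same]
  apply div_pos _ hN
  have hx := x.im_pos
  simp only [Complex.sub_im, Complex.sub_re, Complex.mul_im, Complex.mul_re,
    Complex.conj_re, Complex.conj_im, Complex.one_im, Complex.one_re, coe_im, coe_re]
  nlinarith [x.im_pos]

lemma myAbs_phi (z b : ℍ) :
    ‖((z : ℂ) - (b : ℂ)) / ((z : ℂ) - (starRingEnd ℂ) (b : ℂ))‖
      = Real.tanh (dist z b / 2) := by
  rw [UpperHalfPlane.tanh_half_dist, norm_div, Complex.dist_eq, Complex.dist_eq]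

lemma myPsi_phi (x y : ℍ) :
    ((x : ℂ) - (starRingEnd ℂ) (x : ℂ) * (((y : ℂ) - (x : ℂ)) / ((y : ℂ) - (starRingEnd ℂ) (x : ℂ))))
      / (1 - (((y : ℂ) - (x : ℂ)) / ((y : ℂ) - (starRingEnd ℂ) (x : ℂ)))) = (y : ℂ) := by
  have h1 : (y : ℂ) - (starRingEnd ℂ) (x : ℂ) ≠ 0 := mySub_conj_ne y x
  have h2 : (x : ℂ) - (starRingEnd ℂ) (x : ℂ) ≠ 0 := mySub_conj_ne x x
  have h3 : 1 - (((y : ℂ) - (x : ℂ)) / ((y : ℂ) - (starRingEnd ℂ) (x : ℂ)))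
      = ((x : ℂ) - (starRingEnd ℂ) (x : ℂ)) / ((y : ℂ) - (starRingEnd ℂ) (x : ℂ)) := by
    field_simp
    ring
  rw [h3]
  field_simp
  ring

lemma myOne_sub_ne {w : ℂ} (hw : ‖w‖ < 1) : (1 : ℂ) - w ≠ 0 := by
  intro h
  have : ‖1 - w‖ = 0 := by rw [h]; simp
  have h1 : (1:ℝ) ≤ ‖w‖ + ‖1 - w‖ := by
    calc (1:ℝ) = ‖w + (1 - w)‖ := by norm_num
    _ ≤ ‖w‖ + ‖1 - w‖ := norm_add_le _ _
  linarith

/-- A holomorphic self-map of the hyperbolic plane whose image lies in a compact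
subset `K` is a uniform contraction (with factor depending only on `K`) for the
hyperbolic metric. -/
theorem stmt_0 (K : Set ℂ) (hK : IsCompact K) (hKsub : K ⊆ {z : ℂ | 0 < z.im}) :
    ∃ l : ℝ, l < 1 ∧
      ∀ f : ℂ → ℂ, DifferentiableOn ℂ f {z : ℂ | 0 < z.im} →
        (∀ z : UpperHalfPlane, f (z : ℂ) ∈ K) →
        ∀ (x y fx fy : UpperHalfPlane),
          (fx : ℂ) = f (x : ℂ) → (fy : ℂ) = f (y : ℂ) →
          dist fx fy ≤ l * dist x y := by
  -- the preimage of `K` in the upper half plane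
  set K' : Set ℍ := ((↑) : ℍ → ℂ) ⁻¹' K with hK'
  have hKrange : K ⊆ Set.range ((↑) : ℍ → ℂ) := fun z hz => ⟨⟨z, hKsub hz⟩, rfl⟩
  have hK'img : ((↑) : ℍ → ℂ) '' K' = K := Set.image_preimage_eq_of_subset hKrange
  have hK'cpt : IsCompact K' := by
    rw [isEmbedding_coe.isCompact_iff, hK'img]; exact hK
  have hK'bdd : Bornology.IsBounded K' := hK'cpt.isBounded
  refine ⟨Real.tanh (Metric.diam K' / 2 + 1), myTanh_lt_one _, ?_⟩
  set l : ℝ := Real.tanh (Metric.diam K' / 2 + 1) with hl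
  have hl0 : 0 ≤ l := myTanh_nonneg (by positivity)
  have hl1 : l ≤ 1 := (myTanh_lt_one _).le
  intro f hf hfK x y fx fy hfx hfy
  -- the Möbius maps
  set ψ : ℂ → ℂ := fun u => ((x : ℂ) - (starRingEnd ℂ) (x : ℂ) * u) / (1 - u) with hψ
  set φ : ℂ → ℂ := fun z => (z - (fx : ℂ)) / (z - (starRingEnd ℂ) (fx : ℂ)) with hφ
  set w : ℂ := ((y : ℂ) - (x : ℂ)) / ((y : ℂ) - (starRingEnd ℂ) (x : ℂ)) with hwdef
  have habsw : ‖w‖ = Real.tanh (dist y x / 2) := myAbs_phi y x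
  have hw1 : ‖w‖ < 1 := by rw [habsw]; exact myTanh_lt_one _
  have hwball : w ∈ Metric.ball (0 : ℂ) 1 := by
    rw [Metric.mem_ball, Complex.dist_eq, sub_zero]; exact hw1
  -- maps-to facts
  have hψmaps : Set.MapsTo ψ (Metric.ball (0 : ℂ) 1) {z : ℂ | 0 < z.im} := by
    intro u hu
    rw [Metric.mem_ball, Complex.dist_eq, sub_zero] at hu
    exact myPsi_im_pos x u hu
  have hfmaps : Set.MapsTo f {z : ℂ | 0 < z.im} K := fun z hz => hfK ⟨z, hz⟩
  have hfxK : (fx : ℂ) ∈ K := hfx ▸ hfK x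
  -- differentiability of the composition
  have hψd : DifferentiableOn ℂ ψ (Metric.ball (0 : ℂ) 1) := by
    apply DifferentiableOn.div
    · exact ((differentiable_const _).sub ((differentiable_id).const_mul _)).differentiableOn
    · exact ((differentiable_const _).sub differentiable_id).differentiableOn
    · intro u hu
      rw [Metric.mem_ball, Complex.dist_eq, sub_zero] at hu
      exact myOne_sub_ne hu
  have hφd : DifferentiableOn ℂ φ {z : ℂ | 0 < z.im} := by
    apply DifferentiableOn.div
    · exact ((differentiable_id).sub (differentiable_const _)).differentiableOn
    · exact ((differentiable_id).sub (differentiable_const _)).differentiableOn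
    · intro z hz
      exact mySub_conj_ne ⟨z, hz⟩ fx
  have hgd : DifferentiableOn ℂ (φ ∘ f ∘ ψ) (Metric.ball (0 : ℂ) 1) :=
    (hφd.comp hf (fun z hz => hKsub (hfmaps hz))).comp hψd hψmaps
  -- value at the center
  have hψ0 : ψ 0 = (x : ℂ) := by simp [hψ]
  have hg0 : (φ ∘ f ∘ ψ) 0 = 0 := by
    simp only [Function.comp_apply, hψ0, ← hfx, hφ]
    simp
  -- the composition maps the unit ball into the ball of radius l
  have hmapsg : Set.MapsTo (φ ∘ f ∘ ψ) (Metric.ball (0 : ℂ) 1)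
      (Metric.ball ((φ ∘ f ∘ ψ) 0) l) := by
    intro u hu
    rw [hg0, Metric.mem_ball, Complex.dist_eq, sub_zero]
    have hzim : 0 < (ψ u).im := hψmaps hu
    set Z : ℍ := ⟨f (ψ u), hKsub (hfK ⟨ψ u, hzim⟩)⟩ with hZ
    have hZK : Z ∈ K' := hfK ⟨ψ u, hzim⟩
    have hfxK' : fx ∈ K' := hfxK
    have habs : ‖(φ ∘ f ∘ ψ) u‖ = Real.tanh (dist Z fx / 2) :=
      myAbs_phi Z fx
    rw [habs]
    have hd : dist Z fx ≤ Metric.diam K' := Metric.dist_le_diam_of_mem hK'bdd hZK hfxK'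
    exact myTanh_strictMono (by linarith)
  -- Schwarz lemma
  have hs := Complex.dist_le_div_mul_dist_of_mapsTo_ball hgd (hmapsg.mono_right Metric.ball_subset_closedBall) hwball
  rw [hg0, Complex.dist_eq, Complex.dist_eq, sub_zero, sub_zero, div_one] at hs
  have hψw : ψ w = (y : ℂ) := myPsi_phi x y
  have hgw : ‖(φ ∘ f ∘ ψ) w‖ = Real.tanh (dist fy fx / 2) := by
    have : (φ ∘ f ∘ ψ) w = ((fy : ℂ) - (fx : ℂ)) / ((fy : ℂ) - (starRingEnd ℂ) (fx : ℂ)) := by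
      simp only [Function.comp_apply, hψw, ← hfy, hφ]
    rw [this]
    exact myAbs_phi fy fx
  rw [hgw, habsw] at hs
  have hkey : Real.tanh (dist fy fx / 2) ≤ Real.tanh (l * (dist y x / 2)) := by
    calc Real.tanh (dist fy fx / 2) ≤ l * Real.tanh (dist y x / 2) := hs
    _ ≤ Real.tanh (l * (dist y x / 2)) := myMul_tanh_le hl0 hl1 (by positivity)
  have := (myTanh_strictMono.le_iff_le).1 hkey
  rw [dist_comm fx fy, dist_comm x y]
  linarith
end

section
/- Let U ⊆ ℂ be open, a ∈ U, and let f be holomorphic and injective on U* = {conj(z) : z ∈ U} with f(U*) ⊆ U. Define the antiholomorphic map f*(z) = f(conj(z)). Assume f*(a) = a and 0 < |ρ| < 1 where ρ = f'(conj(a)). Then there exists a holomorphic injective map K defined near a with K(a) = 0 such that K(f*(z)) = ρ · conj(K(z)) for all z near a. -/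
open Complex Metric Set Filter Topology


private lemma hasDerivAt_conj_conj {f : ℂ → ℂ} {c z : ℂ}
    (h : HasDerivAt f c ((starRingEnd ℂ) z)) :
    HasDerivAt (fun w => (starRingEnd ℂ) (f ((starRingEnd ℂ) w))) ((starRingEnd ℂ) c) z := by
  have h1 : HasFDerivAt (starRingEnd ℂ) (conjCLE.toContinuousLinearMap) z :=
    conjCLE.hasFDerivAt
  have h2 := (h.hasFDerivAt.restrictScalars ℝ).comp z h1
  have h3 := (conjCLE.hasFDerivAt (x := f ((starRingEnd ℂ) z))).comp z h2
  rw [hasDerivAt_iff_hasFDerivAt]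
  refine hasFDerivAt_of_restrictScalars ℝ h3 ?_
  ext w
  simp [Complex.conjCLE_apply, mul_comm]


set_option maxHeartbeats 2000000 in
private lemma koenigs {g : ℂ → ℂ} {W : Set ℂ} (hW : IsOpen W) {a : ℂ} (haW : a ∈ W)
    (hg : DifferentiableOn ℂ g W) (hga : g a = a) {l : ℂ} (hl : HasDerivAt g l a)
    (hl0 : 0 < ‖l‖) (hl1 : ‖l‖ < 1) :
    ∃ r > 0, ball a r ⊆ W ∧ (∀ z ∈ ball a r, g z ∈ ball a r) ∧
      ∃ φ : ℂ → ℂ, DifferentiableOn ℂ φ (ball a r) ∧ φ a = 0 ∧ deriv φ a = 1 ∧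
        ∀ z ∈ ball a r, φ (g z) = l * φ z := by
  have hlne : l ≠ 0 := by
    intro h; rw [h] at hl0; simp at hl0
  set e : ℂ → ℂ := fun z => g z - a - l * (z - a) with he
  have hea : e a = 0 := by simp [he, hga]
  have heda : HasDerivAt e 0 a := by
    have h1 : HasDerivAt (fun z : ℂ => g z - a - l * (z - a)) (l - (l * 1)) a :=
      ((hl.sub_const a).sub (((hasDerivAt_id a).sub_const a).const_mul l))
    simpa using h1
  have hganal : AnalyticAt ℂ g a := hg.analyticAt (hW.mem_nhds haW)
  have heanal : AnalyticAt ℂ e a := by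
    apply (hganal.sub analyticAt_const).sub
    exact (analyticAt_const.mul ((analyticAt_id).sub analyticAt_const))
  set D : ℂ → ℂ := dslope (dslope e a) a with hD
  have hDe : ∀ z, e z = (z - a) ^ 2 * D z := by
    intro z
    have h1 : (z - a) • dslope e a z = e z - e a := sub_smul_dslope e a z
    have h2 : (z - a) • D z = dslope e a z - dslope e a a := sub_smul_dslope (dslope e a) a z
    rw [dslope_same] at h2
    rw [heda.deriv, sub_zero] at h2
    rw [hea, sub_zero] at h1
    rw [← h1, ← h2, smul_eq_mul, smul_eq_mul]
    ring
  have hDcont : ContinuousAt D a := by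
    obtain ⟨p, hp⟩ := heanal
    have h1 : AnalyticAt ℂ (dslope e a) a := ⟨_, hp.has_fpower_series_dslope_fslope⟩
    exact continuousAt_dslope_same.2 h1.differentiableAt
  set C : ℝ := ‖D a‖ + 1 with hC
  have hC0 : 0 < C := by positivity
  -- radius r₁ where |D| ≤ C and ball ⊆ W
  obtain ⟨r₁, hr₁0, hr₁⟩ : ∃ r₁ > 0, ball a r₁ ⊆ W ∧
      ∀ z ∈ ball a r₁, ‖D z‖ ≤ C := by
    obtain ⟨δ₁, hδ₁0, hδ₁⟩ := Metric.isOpen_iff.1 hW a haW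
    obtain ⟨δ₂, hδ₂0, hδ₂⟩ := Metric.continuousAt_iff.1 hDcont 1 one_pos
    refine ⟨min δ₁ δ₂, lt_min hδ₁0 hδ₂0, (ball_subset_ball (min_le_left _ _)).trans hδ₁, ?_⟩
    intro z hz
    have hz2 : dist z a < δ₂ := lt_of_lt_of_le (mem_ball.1 hz) (min_le_right _ _)
    have := hδ₂ hz2
    rw [Complex.dist_eq] at this
    calc ‖D z‖ = ‖D a + (D z - D a)‖ := by ring_nf
      _ ≤ ‖D a‖ + ‖D z - D a‖ := norm_add_le _ _
      _ ≤ ‖D a‖ + 1 := by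
          have := hδ₂ hz2; rw [Complex.dist_eq] at this; linarith
  obtain ⟨hr₁W, hr₁D⟩ := hr₁
  set l' : ℝ := ‖l‖ with hl'
  set c : ℝ := (l' + Real.sqrt l') / 2 with hc
  have hcl : l' < c ∧ c ^ 2 < l' ∧ c < 1 := by
    have hs : l' < Real.sqrt l' := by rw [Real.lt_sqrt hl0.le]; nlinarith
    have hs1 : Real.sqrt l' < 1 := by
      rw [show (1:ℝ) = Real.sqrt 1 by simp]
      exact Real.sqrt_lt_sqrt hl0.le hl1
    refine ⟨by rw [hc]; linarith, ?_, by rw [hc]; linarith⟩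
    have h2 : c < Real.sqrt l' := by rw [hc]; linarith
    have h3 : (0:ℝ) ≤ c := by rw [hc]; positivity
    calc c ^ 2 < (Real.sqrt l') ^ 2 := by nlinarith
      _ = l' := Real.sq_sqrt hl0.le
  obtain ⟨hlc, hc2l, hc1⟩ := hcl
  have hc0 : 0 < c := lt_trans hl0 hlc
  set r : ℝ := min (r₁ / 2) ((c - l') / C) with hr
  have hr0 : 0 < r := lt_min (by linarith) (div_pos (by linarith) hC0)
  have hrr₁ : ball a r ⊆ ball a r₁ :=
    ball_subset_ball (le_trans (min_le_left _ _) (by linarith))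
  have hBW : ball a r ⊆ W := hrr₁.trans hr₁W
  -- key contraction estimate
  have hkey : ∀ z ∈ ball a r, ‖g z - a‖ ≤ c * ‖z - a‖ := by
    intro z hz
    have hd : ‖z - a‖ < r := by
      rw [mem_ball, Complex.dist_eq] at hz; exact hz
    have hd0 : 0 ≤ ‖z - a‖ := norm_nonneg _
    have hDz : ‖D z‖ ≤ C := hr₁D z (hrr₁ hz)
    have hez : ‖e z‖ ≤ C * ‖z - a‖ ^ 2 := by
      rw [hDe z, norm_mul, norm_pow]
      have : ‖z - a‖ ^ 2 * ‖D z‖ ≤ ‖z - a‖ ^ 2 * C :=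
        mul_le_mul_of_nonneg_left hDz (by positivity)
      linarith [this]
    have hgz : g z - a = l * (z - a) + e z := by rw [he]; ring
    have hrC : C * r ≤ c - l' := by
      have := min_le_right (r₁ / 2) ((c - l') / C)
      rw [← hr] at this
      calc C * r ≤ C * ((c - l') / C) := mul_le_mul_of_nonneg_left this hC0.le
        _ = c - l' := by field_simp
    calc ‖g z - a‖ = ‖l * (z - a) + e z‖ := by rw [hgz]
      _ ≤ ‖l * (z - a)‖ + ‖e z‖ := norm_add_le _ _
      _ ≤ l' * ‖z - a‖ + C * ‖z - a‖ ^ 2 := by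
          rw [norm_mul]; linarith
      _ = (l' + C * ‖z - a‖) * ‖z - a‖ := by ring
      _ ≤ (l' + C * r) * ‖z - a‖ := by
          have h5 : C * ‖z - a‖ ≤ C * r := mul_le_mul_of_nonneg_left hd.le hC0.le
          nlinarith
      _ ≤ c * ‖z - a‖ := by nlinarith
  have hmaps : ∀ z ∈ ball a r, g z ∈ ball a r := by
    intro z hz
    have hd : ‖z - a‖ < r := by rw [mem_ball, Complex.dist_eq] at hz; exact hz
    rw [mem_ball, Complex.dist_eq]
    calc ‖g z - a‖ ≤ c * ‖z - a‖ := hkey z hz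
      _ < 1 * r := by nlinarith [norm_nonneg (z - a)]
      _ = r := one_mul r
  -- iterates stay in the ball with geometric decay
  have hiter : ∀ n, ∀ z ∈ ball a r, g^[n] z ∈ ball a r ∧
      ‖g^[n] z - a‖ ≤ c ^ n * ‖z - a‖ := by
    intro n
    induction n with
    | zero => intro z hz; simpa using hz
    | succ n ih =>
      intro z hz
      obtain ⟨h1, h2⟩ := ih z hz
      rw [Function.iterate_succ_apply']
      constructor
      · exact hmaps _ h1
      · calc ‖g (g^[n] z) - a‖ ≤ c * ‖g^[n] z - a‖ := hkey _ h1
          _ ≤ c * (c ^ n * ‖z - a‖) := by nlinarith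
          _ = c ^ (n + 1) * ‖z - a‖ := by ring
  have hiterd : ∀ n, DifferentiableOn ℂ (g^[n]) (ball a r) := by
    intro n
    induction n with
    | zero => simpa using differentiableOn_id
    | succ n ih =>
      rw [Function.iterate_succ]
      exact DifferentiableOn.comp ih (hg.mono hBW) (fun z hz => hmaps z hz)
  set φn : ℕ → ℂ → ℂ := fun n z => (g^[n] z - a) / l ^ n with hφn
  have hφnd : ∀ n, DifferentiableOn ℂ (φn n) (ball a r) := fun n =>
    ((hiterd n).sub_const a).div_const _
  have hφn0 : ∀ z, φn 0 z = z - a := by intro z; simp [hφn]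
  have hφna : ∀ n, φn n a = 0 := by
    intro n; simp [hφn, Function.iterate_fixed hga n]
  -- telescoping differences
  have hdn : ∀ n z, φn (n + 1) z - φn n z = e (g^[n] z) / l ^ (n + 1) := by
    intro n z
    rw [hφn]
    simp only [Function.iterate_succ_apply', he]
    field_simp
    ring
  set u : ℕ → ℝ := fun n => (C * r ^ 2 / l') * (c ^ 2 / l') ^ n with hu
  have hus : Summable u := by
    apply Summable.mul_left
    apply summable_geometric_of_lt_one (by positivity)
    rw [div_lt_one hl0]; exact hc2l
  have hbound : ∀ n, ∀ z ∈ ball a r, ‖φn (n + 1) z - φn n z‖ ≤ u n := by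
    intro n z hz
    obtain ⟨h1, h2⟩ := hiter n z hz
    have hd : ‖z - a‖ < r := by rw [mem_ball, Complex.dist_eq] at hz; exact hz
    have hd0 : 0 ≤ ‖z - a‖ := norm_nonneg _
    have hDz : ‖D (g^[n] z)‖ ≤ C := hr₁D _ (hrr₁ h1)
    have hwr : ‖g^[n] z - a‖ ≤ c ^ n * r := by
      calc ‖g^[n] z - a‖ ≤ c ^ n * ‖z - a‖ := h2
        _ ≤ c ^ n * r := by nlinarith [pow_pos hc0 n]
    have he2 : ‖e (g^[n] z)‖ ≤ C * (c ^ n * r) ^ 2 := by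
      rw [hDe, norm_mul, norm_pow]
      calc ‖g^[n] z - a‖ ^ 2 * ‖D (g^[n] z)‖
          ≤ (c ^ n * r) ^ 2 * C := by
            apply mul_le_mul (by nlinarith [norm_nonneg (g^[n] z - a)]) hDz
              (norm_nonneg _) (by positivity)
        _ = C * (c ^ n * r) ^ 2 := by ring
    rw [hdn n z, norm_div, norm_pow]
    rw [hu]
    have hlp : (0:ℝ) < l' ^ (n + 1) := pow_pos hl0 _
    rw [div_le_iff₀ hlp]
    calc ‖e (g^[n] z)‖ ≤ C * (c ^ n * r) ^ 2 := he2
      _ = C * r ^ 2 / l' * (c ^ 2 / l') ^ n * l' ^ (n + 1) := by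
          have hgen : ∀ (X R L Cc : ℝ), L ≠ 0 →
              X * (Cc ^ n * R) ^ 2 = X * R ^ 2 / L * (Cc ^ 2 / L) ^ n * L ^ (n + 1) := by
            intro X R L Cc hL
            rw [div_pow]
            field_simp
            ring
          exact hgen C r l' c (ne_of_gt hl0)
  -- uniform convergence of the telescoping series
  have hTU : TendstoUniformlyOn
      (fun N z => ∑ n ∈ Finset.range N, (φn (n + 1) z - φn n z))
      (fun z => ∑' n, (φn (n + 1) z - φn n z)) atTop (ball a r) :=
    tendstoUniformlyOn_tsum_nat hus (fun n z hz => hbound n z hz)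
  set φ : ℂ → ℂ := fun z => (z - a) + ∑' n, (φn (n + 1) z - φn n z) with hφ
  have hconst : TendstoUniformlyOn (fun _ : ℕ => fun z : ℂ => z - a)
      (fun z : ℂ => z - a) atTop (ball a r) := by
    refine tendstoUniformlyOn_iff.2 fun ε hε => ?_
    filter_upwards with n z hz
    simpa using hε
  have hTU2 : TendstoUniformlyOn φn φ atTop (ball a r) := by
    have h1 := hconst.add hTU
    apply h1.congr
    filter_upwards with N z hz
    simp only [Pi.add_apply]
    have h2 : ∑ n ∈ Finset.range N, (φn (n + 1) z - φn n z) = φn N z - φn 0 z :=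
      Finset.sum_range_sub (fun n => φn n z) N
    rw [h2, hφn0]
    ring
  have hTLU := hTU2.tendstoLocallyUniformlyOn
  have hφdiff : DifferentiableOn ℂ φ (ball a r) :=
    hTLU.differentiableOn (Eventually.of_forall hφnd) isOpen_ball
  have hφa : φ a = 0 := by
    have h1 : Tendsto (fun n => φn n a) atTop (𝓝 (φ a)) :=
      hTU2.tendsto_at (mem_ball_self hr0)
    have h2 : Tendsto (fun n => φn n a) atTop (𝓝 0) := by
      simpa [hφna] using (tendsto_const_nhds : Tendsto (fun _ : ℕ => (0:ℂ)) atTop (𝓝 0))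
    exact tendsto_nhds_unique h1 h2
  have hφfe : ∀ z ∈ ball a r, φ (g z) = l * φ z := by
    intro z hz
    have h1 : Tendsto (fun n => φn n (g z)) atTop (𝓝 (φ (g z))) :=
      hTU2.tendsto_at (hmaps z hz)
    have h3 : ∀ n, φn n (g z) = l * φn (n + 1) z := by
      intro n
      have harith : ∀ (X L : ℂ), L ≠ 0 → X / L ^ n = L * (X / L ^ (n + 1)) := by
        intro X L hL
        rw [pow_succ]
        field_simp
      show (g^[n] (g z) - a) / l ^ n = l * ((g^[n + 1] z - a) / l ^ (n + 1))
      rw [← Function.iterate_succ_apply]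
      exact harith _ _ hlne
    have h4 : Tendsto (fun n => φn (n + 1) z) atTop (𝓝 (φ z)) :=
      (hTU2.tendsto_at hz).comp (tendsto_add_atTop_nat 1)
    have h5 : Tendsto (fun n => φn n (g z)) atTop (𝓝 (l * φ z)) := by
      rw [show (fun n => φn n (g z)) = (fun n => l * φn (n + 1) z) from funext h3]
      exact h4.const_mul l
    exact tendsto_nhds_unique h1 h5
  have hφd1 : deriv φ a = 1 := by
    have hTLUd := hTLU.deriv (Eventually.of_forall hφnd) isOpen_ball
    have h1 : Tendsto (fun n => deriv (φn n) a) atTop (𝓝 (deriv φ a)) :=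
      hTLUd.tendsto_at (mem_ball_self hr0)
    have h2 : ∀ n, deriv (φn n) a = 1 := by
      intro n
      have hgn : HasDerivAt (g^[n]) (l ^ n) a := by
        induction n with
        | zero => simpa using hasDerivAt_id a
        | succ n ih =>
          have h3 : HasDerivAt g l (g^[n] a) := by
            rw [Function.iterate_fixed hga n]; exact hl
          have h4 := h3.comp a ih
          rw [Function.iterate_succ', pow_succ]
          rw [mul_comm] at h4
          exact h4
      have h5 : HasDerivAt (φn n) (l ^ n / l ^ n) a := (hgn.sub_const a).div_const _
      rw [div_self (pow_ne_zero n hlne)] at h5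
      exact h5.deriv
    have h6 : Tendsto (fun n => deriv (φn n) a) atTop (𝓝 (1:ℂ)) := by
      rw [show (fun n => deriv (φn n) a) = (fun _ => (1:ℂ)) from funext h2]
      exact tendsto_const_nhds
    exact tendsto_nhds_unique h1 h6
  exact ⟨r, hr0, hBW, hmaps, φ, hφdiff, hφa, hφd1, hφfe⟩

/-- Linearization of an antiholomorphic germ with attracting fixed point: if `f` is
holomorphic and injective on `U* = conj '' U` with `f (U*) ⊆ U`, the antiholomorphic
map `f* z = f (conj z)` fixes `a ∈ U`, and `ρ = f' (conj a)` satisfies `0 < |ρ| < 1`,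
then there is a holomorphic injective coordinate `K` near `a` with `K a = 0`
conjugating `f*` to `w ↦ ρ · conj w`. -/
theorem stmt_3 (U : Set ℂ) (hU : IsOpen U) (a : ℂ) (ha : a ∈ U)
    (f : ℂ → ℂ) (hf : DifferentiableOn ℂ f ((starRingEnd ℂ) '' U))
    (hinj : Set.InjOn f ((starRingEnd ℂ) '' U))
    (hmaps : Set.MapsTo f ((starRingEnd ℂ) '' U) U)
    (hfix : f ((starRingEnd ℂ) a) = a)
    (ρ : ℂ) (hρ : ρ = deriv f ((starRingEnd ℂ) a))
    (hρ0 : 0 < ‖ρ‖) (hρ1 : ‖ρ‖ < 1) :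
    ∃ (V : Set ℂ) (K : ℂ → ℂ), IsOpen V ∧ a ∈ V ∧ V ⊆ U ∧
      DifferentiableOn ℂ K V ∧ Set.InjOn K V ∧ K a = 0 ∧
      ∀ z ∈ V, K (f ((starRingEnd ℂ) z)) = ρ * (starRingEnd ℂ) (K z) := by
  have hU' : IsOpen ((starRingEnd ℂ) '' U) := by
    have himg : (starRingEnd ℂ) '' U = (starRingEnd ℂ) ⁻¹' U := by
      ext z
      constructor
      · rintro ⟨w, hw, rfl⟩; simpa using hw
      · intro hz; exact ⟨(starRingEnd ℂ) z, hz, by simp⟩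
    rw [himg]
    exact hU.preimage Complex.continuous_conj
  have hconjmem : ∀ z ∈ U, (starRingEnd ℂ) z ∈ (starRingEnd ℂ) '' U :=
    fun z hz => ⟨z, hz, rfl⟩
  have hfat : ∀ w ∈ ((starRingEnd ℂ) '' U), HasDerivAt f (deriv f w) w := fun w hw =>
    (hf.differentiableAt (hU'.mem_nhds hw)).hasDerivAt
  set G : ℂ → ℂ := fun z => (starRingEnd ℂ) (f ((starRingEnd ℂ) z)) with hGdef
  set g : ℂ → ℂ := fun z => f (G z) with hgdef
  have hGd : ∀ z ∈ U, HasDerivAt G ((starRingEnd ℂ) (deriv f ((starRingEnd ℂ) z))) z :=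
    fun z hz => hasDerivAt_conj_conj (hfat _ (hconjmem z hz))
  have hGdiff : DifferentiableOn ℂ G U := fun z hz =>
    ((hGd z hz).differentiableAt).differentiableWithinAt
  have hGmaps : Set.MapsTo G U ((starRingEnd ℂ) '' U) := by
    intro z hz
    exact ⟨f ((starRingEnd ℂ) z), hmaps (hconjmem z hz), rfl⟩
  have hgdiff : DifferentiableOn ℂ g U := hf.comp hGdiff hGmaps
  have hGa : G a = (starRingEnd ℂ) a := by rw [hGdef]; simp [hfix]
  have hga : g a = a := by rw [hgdef]; simp only [hGa]; exact hfix
  have hfda : HasDerivAt f ρ ((starRingEnd ℂ) a) := by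
    rw [hρ]; exact hfat _ (hconjmem a ha)
  have hgd : HasDerivAt g (ρ * (starRingEnd ℂ) ρ) a := by
    have h2 : HasDerivAt G ((starRingEnd ℂ) ρ) a := by
      have := hGd a ha
      rwa [← hρ] at this
    have h3 : HasDerivAt f ρ (G a) := by rw [hGa]; exact hfda
    exact h3.comp a h2
  set l : ℂ := ρ * (starRingEnd ℂ) ρ with hldef
  have habsl : ‖l‖ = ‖ρ‖ * ‖ρ‖ := by
    rw [hldef, norm_mul, Complex.norm_conj]
  have hl0' : 0 < ‖l‖ := by rw [habsl]; positivity
  have hl1' : ‖l‖ < 1 := by rw [habsl]; nlinarith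
  have hlne : l ≠ 0 := by
    intro h; rw [h] at hl0'; simp at hl0'
  have hconjl : (starRingEnd ℂ) l = l := by rw [hldef]; simp [mul_comm]
  obtain ⟨r, hr0, hBU, hmapsg, φ, hφdiff, hφa, hφd1, hφfe⟩ :=
    koenigs hU ha hgdiff hga hgd hl0' hl1'
  -- the chosen neighborhood
  have hfc : ContinuousOn (fun z => f ((starRingEnd ℂ) z)) U :=
    hf.continuousOn.comp Complex.continuous_conj.continuousOn (fun z hz => hconjmem z hz)
  set V₀ : Set ℂ := (U ∩ (fun z => f ((starRingEnd ℂ) z)) ⁻¹' (ball a r)) ∩ ball a r with hV₀def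
  have hV₀open : IsOpen V₀ :=
    (hfc.isOpen_inter_preimage hU isOpen_ball).inter isOpen_ball
  have haV₀ : a ∈ V₀ := by
    refine ⟨⟨ha, ?_⟩, mem_ball_self hr0⟩
    show f ((starRingEnd ℂ) a) ∈ ball a r
    rw [hfix]; exact mem_ball_self hr0
  have hV₀U : V₀ ⊆ U := fun z hz => hz.1.1
  set K : ℂ → ℂ := fun z => l * φ z + ρ * (starRingEnd ℂ) (φ (f ((starRingEnd ℂ) z))) with hKdef
  have hKa : K a = 0 := by
    rw [hKdef]; simp [hfix, hφa]
  have hφat : ∀ w ∈ ball a r, HasDerivAt φ (deriv φ w) w := fun w hw =>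
    (hφdiff.differentiableAt (isOpen_ball.mem_nhds hw)).hasDerivAt
  have hKdAt : ∀ z ∈ V₀, DifferentiableAt ℂ K z := by
    rintro z ⟨⟨hzU, hzpre⟩, hzball⟩
    have hw : f ((starRingEnd ℂ) z) ∈ ball a r := hzpre
    have h2 : HasDerivAt (fun x => φ (f x))
        (deriv φ (f ((starRingEnd ℂ) z)) * deriv f ((starRingEnd ℂ) z)) ((starRingEnd ℂ) z) :=
      (hφat _ hw).comp _ (hfat _ (hconjmem z hzU))
    have h3 := hasDerivAt_conj_conj h2
    exact (((hφat z hzball).const_mul l).add (h3.const_mul ρ)).differentiableAt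
  have hKdiff : DifferentiableOn ℂ K V₀ := fun z hz =>
    (hKdAt z hz).differentiableWithinAt
  -- functional equation on V₀
  have hKfe : ∀ z ∈ V₀, K (f ((starRingEnd ℂ) z)) = ρ * (starRingEnd ℂ) (K z) := by
    rintro z ⟨⟨hzU, hzpre⟩, hzball⟩
    have h1 : K (f ((starRingEnd ℂ) z))
        = l * φ (f ((starRingEnd ℂ) z)) + ρ * (starRingEnd ℂ) (φ (g z)) := rfl
    rw [h1, hφfe z hzball, hKdef]
    simp only [map_add, map_mul, Complex.conj_conj, hconjl]
    ring
  -- strict derivative and local injectivity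
  have hφa1 : HasDerivAt φ 1 a := by
    have := hφat a (mem_ball_self hr0)
    rwa [hφd1] at this
  have hQ : HasDerivAt (fun x => (starRingEnd ℂ) (φ (f ((starRingEnd ℂ) x))))
      ((starRingEnd ℂ) (1 * ρ)) a := by
    have h4 : HasDerivAt φ 1 (f ((starRingEnd ℂ) a)) := by rw [hfix]; exact hφa1
    exact hasDerivAt_conj_conj (f := fun x => φ (f x)) (c := 1 * ρ) (z := a)
      (h4.comp _ hfda)
  have hKd : HasDerivAt K (l * 1 + ρ * (starRingEnd ℂ) (1 * ρ)) a :=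
    (hφa1.const_mul l).add (hQ.const_mul ρ)
  have hcoef : l * 1 + ρ * (starRingEnd ℂ) (1 * ρ) = 2 * l := by
    rw [hldef]; simp; ring
  rw [hcoef] at hKd
  have h2lne : (2 : ℂ) * l ≠ 0 := mul_ne_zero two_ne_zero hlne
  have hKanal : AnalyticAt ℂ K a := hKdiff.analyticAt (hV₀open.mem_nhds haV₀)
  obtain ⟨p, hp⟩ := hKanal
  have hsd : HasStrictDerivAt K (2 * l) a := by
    have h5 := hp.hasStrictDerivAt
    have h6 : (p 1 fun _ => 1) = 2 * l := by
      have h7 := hp.hasDerivAt.deriv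
      rw [hKd.deriv] at h7
      exact h7.symm
    rwa [h6] at h5
  set P := (hsd.hasStrictFDerivAt_equiv h2lne).toOpenPartialHomeomorph K with hPdef
  have hPsrc : a ∈ P.source := (hsd.hasStrictFDerivAt_equiv h2lne).mem_toOpenPartialHomeomorph_source
  have hPopen : IsOpen P.source := P.open_source
  have hKinj : Set.InjOn K P.source := by
    have h8 := P.injOn
    rwa [(hsd.hasStrictFDerivAt_equiv h2lne).toOpenPartialHomeomorph_coe] at h8
  refine ⟨V₀ ∩ P.source, K, hV₀open.inter hPopen, ⟨haV₀, hPsrc⟩,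
    (inter_subset_left).trans hV₀U, hKdiff.mono inter_subset_left,
    hKinj.mono inter_subset_right, hKa, fun z hz => hKfe z hz.1⟩
end

section
/- Let σ : [0,1] → ℂ be a rectifiable curve (of finite length ℓ) with σ(0) = c·a and σ(1) = a for some a ∈ ℂ \ {0} and real 0 < c < 1. Define Γ = ⋃_{n≥0} cⁿ · σ([0,1]), where cⁿ·σ([0,1]) is the image of σ scaled by cⁿ. Then Γ ∪ {0} is a connected compact set containing 0 and a, which is the image of a rectifiable curve from 0 to a of length at most ℓ/(1-c). -/
open Set

open Set

noncomputable def stmt10N (t : ℝ) : ℕ := ⌊Real.logb 2 t⁻¹⌋₊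

noncomputable def stmt10Tau (c : ℝ) (σ : ℝ → ℂ) (t : ℝ) : ℂ :=
  if t ≤ 0 then 0 else (c : ℂ) ^ stmt10N t * σ (2 ^ (stmt10N t + 1) * t - 1)

lemma stmt10_pow_pos (n : ℕ) : (0:ℝ) < 2 ^ n := by positivity

lemma stmt10N_ge {n : ℕ} {t : ℝ} (h0 : 0 < t) (h : t ≤ ((2:ℝ)^n)⁻¹) : n ≤ stmt10N t := by
  have h2 : (2:ℝ) ^ n ≤ t⁻¹ := by
    rw [← inv_inv ((2:ℝ)^n)]
    exact inv_anti₀ h0 h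
  have : (n:ℝ) ≤ Real.logb 2 t⁻¹ := by
    rw [Real.le_logb_iff_rpow_le (by norm_num) (by positivity)]
    rwa [Real.rpow_natCast]
  exact Nat.le_floor this

lemma stmt10N_eq {n : ℕ} {t : ℝ} (h1 : ((2:ℝ)^(n+1))⁻¹ < t) (h2 : t ≤ ((2:ℝ)^n)⁻¹) :
    stmt10N t = n := by
  have h0 : 0 < t := lt_trans (by positivity) h1
  have hup : t⁻¹ < (2:ℝ) ^ (n + 1) := by
    rw [← inv_inv ((2:ℝ)^(n+1))]
    exact inv_strictAnti₀ (by positivity) h1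
  have hlt : Real.logb 2 t⁻¹ < n + 1 := by
    rw [Real.logb_lt_iff_lt_rpow (by norm_num) (by positivity)]
    rwa [show ((n:ℝ)+1) = ((n+1 : ℕ):ℝ) by push_cast; ring, Real.rpow_natCast]
  have hge := stmt10N_ge h0 h2
  have := Nat.lt_floor_add_one (Real.logb 2 t⁻¹)
  -- stmt10N t ≤ n
  have hle : stmt10N t ≤ n := by
    by_contra hc
    push_neg at hc
    have : (n+1 : ℝ) ≤ (stmt10N t : ℝ) := by exact_mod_cast hc
    have hfl := Nat.floor_le (R := ℝ) (show 0 ≤ Real.logb 2 t⁻¹ by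
      apply Real.logb_nonneg (by norm_num)
      calc (1:ℝ) ≤ 2 ^ n := one_le_pow₀ (by norm_num)
      _ ≤ t⁻¹ := by rw [← inv_inv ((2:ℝ)^n)]; exact inv_anti₀ h0 h2)
    have : (n+1:ℝ) ≤ Real.logb 2 t⁻¹ := le_trans this hfl
    linarith
  omega

lemma stmt10N_mem {t : ℝ} (h0 : 0 < t) (h1 : t ≤ 1) :
    ((2:ℝ)^(stmt10N t + 1))⁻¹ < t ∧ t ≤ ((2:ℝ)^(stmt10N t))⁻¹ := by
  have hnn : 0 ≤ Real.logb 2 t⁻¹ := by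
    apply Real.logb_nonneg (by norm_num)
    rw [le_inv_comm₀ one_pos h0]
    simpa using h1
  constructor
  · have : Real.logb 2 t⁻¹ < stmt10N t + 1 := Nat.lt_floor_add_one _
    rw [Real.logb_lt_iff_lt_rpow (by norm_num) (by positivity)] at this
    rw [show ((stmt10N t:ℝ)+1) = ((stmt10N t+1 : ℕ):ℝ) by push_cast; ring, Real.rpow_natCast] at this
    rw [inv_lt_comm₀ (by positivity) h0]
    exact this
  · have : (stmt10N t : ℝ) ≤ Real.logb 2 t⁻¹ := Nat.floor_le hnn
    rw [Real.le_logb_iff_rpow_le (by norm_num) (by positivity), Real.rpow_natCast] at this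
    exact le_trans (le_of_eq (inv_inv t).symm) (inv_anti₀ (by positivity) this)

lemma stmt10_affine_mem {n : ℕ} {t : ℝ} (h : t ∈ Icc ((2:ℝ)^(n+1))⁻¹ ((2:ℝ)^n)⁻¹) :
    (2:ℝ) ^ (n+1) * t - 1 ∈ Icc (0:ℝ) 1 := by
  obtain ⟨hl, hr⟩ := h
  have p1 : (0:ℝ) < 2 ^ (n+1) := by positivity
  constructor
  · have := mul_le_mul_of_nonneg_left hl (le_of_lt p1)
    rw [mul_inv_cancel₀ (ne_of_gt p1)] at this
    linarith
  · have := mul_le_mul_of_nonneg_left hr (le_of_lt p1)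
    have h2 : (2:ℝ)^(n+1) * ((2:ℝ)^n)⁻¹ = 2 := by
      rw [pow_succ]
      field_simp
    rw [h2] at this
    linarith

lemma stmt10Tau_eqOn {σ : ℝ → ℂ} {c : ℝ} {a : ℂ}
    (h0 : σ 0 = (c:ℂ) * a) (h1 : σ 1 = a) (n : ℕ) {t : ℝ}
    (ht : t ∈ Icc ((2:ℝ)^(n+1))⁻¹ ((2:ℝ)^n)⁻¹) :
    stmt10Tau c σ t = (c : ℂ) ^ n * σ (2 ^ (n + 1) * t - 1) := by
  obtain ⟨hl, hr⟩ := ht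
  have ht0 : 0 < t := lt_of_lt_of_le (by positivity) hl
  rcases eq_or_lt_of_le hl with heq | hlt
  · -- left endpoint
    have hlt2 : ((2:ℝ)^(n+1+1))⁻¹ < t := by
      rw [← heq]
      apply inv_strictAnti₀ (by positivity)
      have : (1:ℝ) < 2 := one_lt_two
      exact pow_lt_pow_right₀ this (by omega)
    have hN : stmt10N t = n + 1 := stmt10N_eq hlt2 (le_of_eq heq.symm)
    have harg : (2:ℝ) ^ (n+1+1) * t - 1 = 1 := by
      rw [← heq, pow_succ]
      field_simp
      norm_num
    have harg2 : (2:ℝ) ^ (n+1) * t - 1 = 0 := by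
      rw [← heq]
      field_simp
      norm_num
    rw [stmt10Tau, if_neg (not_le.2 ht0), hN, harg, harg2, h1, h0]
    ring
  · have hN : stmt10N t = n := stmt10N_eq hlt hr
    rw [stmt10Tau, if_neg (not_le.2 ht0), hN]

lemma stmt10_evar_smul_le (c : ℝ) (hc0 : 0 < c) (n : ℕ) (f : ℝ → ℂ) (s : Set ℝ) :
    eVariationOn (fun x => (c:ℂ)^n * f x) s ≤ ENNReal.ofReal (c^n) * eVariationOn f s := by
  have hl : LipschitzWith ‖(c:ℂ)^n‖₊ (fun z : ℂ => (c:ℂ)^n * z) := by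
    simpa [smul_eq_mul] using lipschitzWith_smul (β := ℂ) ((c:ℂ)^n)
  have := (hl.lipschitzOnWith (s := univ)).comp_eVariationOn_le (mapsTo_univ f s)
  have hnorm : (‖(c:ℂ)^n‖₊ : ENNReal) = ENNReal.ofReal (c^n) := by
    rw [← ENNReal.ofReal_coe_nnreal, coe_nnnorm]
    congr 1
    rw [norm_pow, Complex.norm_real, Real.norm_eq_abs, abs_of_pos hc0]
  rw [hnorm] at this
  exact this

lemma stmt10_contOn_piece {σ : ℝ → ℂ} {c : ℝ} {a : ℂ}
    (hcont : ContinuousOn σ (Icc 0 1)) (h0 : σ 0 = (c:ℂ) * a) (h1 : σ 1 = a) (n : ℕ) :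
    ContinuousOn (stmt10Tau c σ) (Icc ((2:ℝ)^(n+1))⁻¹ ((2:ℝ)^n)⁻¹) := by
  have hf : ContinuousOn (fun t : ℝ => (c : ℂ) ^ n * σ ((2:ℝ) ^ (n + 1) * t - 1))
      (Icc ((2:ℝ)^(n+1))⁻¹ ((2:ℝ)^n)⁻¹) := by
    apply ContinuousOn.mul continuousOn_const
    apply hcont.comp ((continuous_const.mul continuous_id').sub continuous_const).continuousOn
    intro t ht
    exact stmt10_affine_mem ht
  exact hf.congr (fun t ht => stmt10Tau_eqOn h0 h1 n ht)

lemma stmt10_var_piece {σ : ℝ → ℂ} {c : ℝ} {a : ℂ} (h0 : σ 0 = (c:ℂ)*a) (h1 : σ 1 = a)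
    (hc0 : 0 < c) (n : ℕ) {t : ℝ} (ht : t ∈ Icc ((2:ℝ)^(n+1))⁻¹ ((2:ℝ)^n)⁻¹) :
    eVariationOn (stmt10Tau c σ) (Icc t ((2:ℝ)^n)⁻¹) ≤
      ENNReal.ofReal (c^n) * eVariationOn σ (Icc ((2:ℝ)^(n+1) * t - 1) 1) := by
  have hsub : Icc t ((2:ℝ)^n)⁻¹ ⊆ Icc ((2:ℝ)^(n+1))⁻¹ ((2:ℝ)^n)⁻¹ :=
    Icc_subset_Icc ht.1 le_rfl
  have e1 : eVariationOn (stmt10Tau c σ) (Icc t ((2:ℝ)^n)⁻¹)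
      = eVariationOn ((fun x => (c:ℂ)^n * σ x) ∘ (fun u => (2:ℝ)^(n+1) * u - 1))
          (Icc t ((2:ℝ)^n)⁻¹) :=
    eVariationOn.eq_of_eqOn (fun u hu => stmt10Tau_eqOn h0 h1 n (hsub hu))
  rw [e1]
  have hp : (0:ℝ) < 2^(n+1) := by positivity
  calc eVariationOn ((fun x => (c:ℂ)^n * σ x) ∘ (fun u => (2:ℝ)^(n+1) * u - 1))
        (Icc t ((2:ℝ)^n)⁻¹)
      ≤ eVariationOn (fun x => (c:ℂ)^n * σ x) (Icc ((2:ℝ)^(n+1)*t - 1) 1) := by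
        apply eVariationOn.comp_le_of_monotoneOn
        · intro x _ y _ hxy
          have := mul_le_mul_of_nonneg_left hxy (le_of_lt hp)
          simp only
          linarith
        · intro u hu
          constructor
          · have := mul_le_mul_of_nonneg_left hu.1 (le_of_lt hp)
            simp only
            linarith
          · have := mul_le_mul_of_nonneg_left hu.2 (le_of_lt hp)
            have h2 : (2:ℝ)^(n+1) * ((2:ℝ)^n)⁻¹ = 2 := by
              rw [pow_succ]; field_simp
            rw [h2] at this
            simp only
            linarith
    _ ≤ ENNReal.ofReal (c^n) * eVariationOn σ (Icc ((2:ℝ)^(n+1)*t - 1) 1) :=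
        stmt10_evar_smul_le c hc0 n σ _

/-- Concatenating the rescaled copies `cⁿ·σ` of a rectifiable curve `σ` from `c·a` to `a`
yields a compact connected set `Γ ∪ {0}` containing `0` and `a`, which is the image of a
rectifiable curve from `0` to `a` of length at most `ℓ/(1-c)`. -/
theorem stmt_10 (σ : ℝ → ℂ) (hcont : ContinuousOn σ (Set.Icc 0 1))
    (ℓ : ℝ) (hℓ0 : 0 ≤ ℓ) (hlen : eVariationOn σ (Set.Icc 0 1) = ENNReal.ofReal ℓ)
    (a : ℂ) (ha : a ≠ 0) (c : ℝ) (hc0 : 0 < c) (hc1 : c < 1)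
    (h0 : σ 0 = (c : ℂ) * a) (h1 : σ 1 = a) :
    IsCompact ((⋃ n : ℕ, (fun z => (c : ℂ) ^ n * z) '' (σ '' Set.Icc 0 1)) ∪ {0}) ∧
    IsConnected ((⋃ n : ℕ, (fun z => (c : ℂ) ^ n * z) '' (σ '' Set.Icc 0 1)) ∪ {0}) ∧
    (0 : ℂ) ∈ (⋃ n : ℕ, (fun z => (c : ℂ) ^ n * z) '' (σ '' Set.Icc 0 1)) ∪ {0} ∧
    a ∈ (⋃ n : ℕ, (fun z => (c : ℂ) ^ n * z) '' (σ '' Set.Icc 0 1)) ∪ {0} ∧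
    ∃ τ : ℝ → ℂ, ContinuousOn τ (Set.Icc 0 1) ∧ τ 0 = 0 ∧ τ 1 = a ∧
      τ '' Set.Icc 0 1 = (⋃ n : ℕ, (fun z => (c : ℂ) ^ n * z) '' (σ '' Set.Icc 0 1)) ∪ {0} ∧
      eVariationOn τ (Set.Icc 0 1) ≤ ENNReal.ofReal (ℓ / (1 - c)) := by
  have h1c : (0:ℝ) < 1 - c := by linarith
  have htau0 : stmt10Tau c σ 0 = 0 := if_pos le_rfl
  have htau1 : stmt10Tau c σ 1 = a := by
    have hm : (1:ℝ) ∈ Icc ((2:ℝ)^(0+1))⁻¹ ((2:ℝ)^0)⁻¹ := by norm_num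
    rw [stmt10Tau_eqOn h0 h1 0 hm]
    norm_num [h1]
  -- distance bounds
  have hbd : ∀ x ∈ Icc (0:ℝ) 1, dist (σ x) (σ 0) ≤ ℓ := by
    intro x hx
    have h := eVariationOn.edist_le σ hx (show (0:ℝ) ∈ Icc (0:ℝ) 1 by norm_num)
    rw [hlen, edist_dist] at h
    exact (ENNReal.ofReal_le_ofReal_iff hℓ0).1 h
  have h0norm : ‖σ 0‖ = c * ‖a‖ := by
    rw [h0, norm_mul, Complex.norm_real, Real.norm_eq_abs, abs_of_pos hc0]
  have hnorm_a : (1 - c) * ‖a‖ ≤ ℓ := by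
    have h := hbd 1 (by norm_num)
    rw [h1, h0, dist_eq_norm] at h
    have he : a - (c:ℂ) * a = ((1 - c : ℝ) : ℂ) * a := by push_cast; ring
    rwa [he, norm_mul, Complex.norm_real, Real.norm_eq_abs, abs_of_pos h1c] at h
  have hbd2 : ∀ x ∈ Icc (0:ℝ) 1, ‖σ x‖ ≤ c * ‖a‖ + ℓ := by
    intro x hx
    have h := hbd x hx
    have h2 : ‖σ x‖ ≤ ‖σ 0‖ + ‖σ x - σ 0‖ := by
      calc ‖σ x‖ = ‖σ 0 + (σ x - σ 0)‖ := by congr 1; ring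
      _ ≤ ‖σ 0‖ + ‖σ x - σ 0‖ := norm_add_le _ _
    rw [h0norm] at h2
    rw [dist_eq_norm] at h
    linarith
  -- continuity
  have hconttau : ContinuousOn (stmt10Tau c σ) (Icc 0 1) := by
    have hcp : ∀ n : ℕ, ContinuousOn (stmt10Tau c σ) (Icc ((2:ℝ)^(n+1))⁻¹ ((2:ℝ)^n)⁻¹) :=
      fun n => stmt10_contOn_piece hcont h0 h1 n
    intro t ht
    rcases eq_or_lt_of_le ht.1 with h0t | h0t
    · -- t = 0
      rw [← h0t]
      rw [Metric.continuousWithinAt_iff]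
      intro ε hε
      set M := c * ‖a‖ + ℓ with hM
      have hM0 : 0 ≤ M := add_nonneg (mul_nonneg hc0.le (norm_nonneg a)) hℓ0
      obtain ⟨k, hk⟩ : ∃ k : ℕ, c^k * (M+1) < ε := by
        obtain ⟨k, hk⟩ := exists_pow_lt_of_lt_one (show (0:ℝ) < ε/(M+1) by positivity) hc1
        exact ⟨k, by rwa [← lt_div_iff₀ (by linarith : (0:ℝ) < M+1)]⟩
      refine ⟨((2:ℝ)^k)⁻¹, by positivity, ?_⟩
      intro x hx hdist
      rw [htau0, dist_zero_right]
      rcases le_or_gt x 0 with hx0 | hx0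
      · rw [show stmt10Tau c σ x = 0 from if_pos hx0]
        simpa using hε
      · have hxk : x ≤ ((2:ℝ)^k)⁻¹ := by
          rw [Real.dist_eq, abs_of_pos (by linarith : (0:ℝ) < x - 0)] at hdist
          linarith
        have hge : k ≤ stmt10N x := stmt10N_ge hx0 hxk
        obtain ⟨hl2, hr2⟩ := stmt10N_mem hx0 hx.2
        rw [stmt10Tau_eqOn h0 h1 (stmt10N x) ⟨le_of_lt hl2, hr2⟩]
        rw [norm_mul, norm_pow, Complex.norm_real, Real.norm_eq_abs, abs_of_pos hc0]
        have hσ : ‖σ ((2:ℝ)^(stmt10N x + 1) * x - 1)‖ ≤ M :=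
          hbd2 _ (stmt10_affine_mem ⟨le_of_lt hl2, hr2⟩)
        calc c^(stmt10N x) * ‖σ ((2:ℝ)^(stmt10N x + 1) * x - 1)‖
            ≤ c^k * (M+1) := by
              apply mul_le_mul (pow_le_pow_of_le_one hc0.le hc1.le hge)
                (by linarith) (norm_nonneg _) (pow_nonneg hc0.le _)
          _ < ε := hk
    · -- 0 < t
      obtain ⟨hl, hr⟩ := stmt10N_mem h0t ht.2
      rcases eq_or_lt_of_le hr with heq | hlt
      · rcases Nat.eq_zero_or_pos (stmt10N t) with hn0 | hn0
        · -- t = 1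
          have ht1 : t = 1 := by rw [heq, hn0]; norm_num
          have hcw : ContinuousWithinAt (stmt10Tau c σ)
              (Icc ((2:ℝ)^(0+1))⁻¹ ((2:ℝ)^0)⁻¹) t :=
            (hcp 0).continuousWithinAt (by rw [ht1]; constructor <;> norm_num)
          apply hcw.mono_of_mem_nhdsWithin
          apply mem_nhdsWithin.2 ⟨Ioi ((2:ℝ)^(0+1))⁻¹, isOpen_Ioi, by rw [ht1]; norm_num, ?_⟩
          rintro x ⟨hx1, hx2⟩
          refine ⟨le_of_lt hx1, ?_⟩
          simpa using hx2.2
        · obtain ⟨m, hm⟩ : ∃ m, stmt10N t = m + 1 := ⟨stmt10N t - 1, by omega⟩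
          rw [hm] at heq hl hr
          have hr' : ((2:ℝ)^(m+1))⁻¹ < ((2:ℝ)^m)⁻¹ :=
            inv_strictAnti₀ (by positivity) (pow_lt_pow_right₀ one_lt_two (by omega))
          have hcw1 : ContinuousWithinAt (stmt10Tau c σ)
              (Icc ((2:ℝ)^(m+1+1))⁻¹ ((2:ℝ)^(m+1))⁻¹) t :=
            (hcp (m+1)).continuousWithinAt ⟨le_of_lt hl, hr⟩
          have hcw2 : ContinuousWithinAt (stmt10Tau c σ)
              (Icc ((2:ℝ)^(m+1))⁻¹ ((2:ℝ)^m)⁻¹) t :=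
            (hcp m).continuousWithinAt ⟨le_of_eq heq.symm, by rw [heq]; exact le_of_lt hr'⟩
          have hun := hcw1.union hcw2
          rw [Icc_union_Icc_eq_Icc
            (inv_anti₀ (by positivity) (pow_le_pow_right₀ one_le_two (by omega)))
            (le_of_lt hr')] at hun
          apply hun.mono_of_mem_nhdsWithin
          apply mem_nhdsWithin_of_mem_nhds
          apply Icc_mem_nhds hl (by rw [heq]; exact hr')
      · -- interior of piece
        have hcw : ContinuousWithinAt (stmt10Tau c σ)
            (Icc ((2:ℝ)^(stmt10N t + 1))⁻¹ ((2:ℝ)^(stmt10N t))⁻¹) t :=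
          (hcp (stmt10N t)).continuousWithinAt ⟨le_of_lt hl, hr⟩
        apply hcw.mono_of_mem_nhdsWithin
        exact mem_nhdsWithin_of_mem_nhds (Icc_mem_nhds hl hlt)
  -- image
  have himg : stmt10Tau c σ '' Icc 0 1
      = (⋃ n : ℕ, (fun z => (c : ℂ) ^ n * z) '' (σ '' Set.Icc 0 1)) ∪ {0} := by
    apply Subset.antisymm
    · rintro _ ⟨t, ht, rfl⟩
      rcases eq_or_lt_of_le ht.1 with h0t | h0t
      · rw [← h0t, htau0]
        exact Or.inr rfl
      · obtain ⟨hl, hr⟩ := stmt10N_mem h0t ht.2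
        have hval := stmt10Tau_eqOn h0 h1 (stmt10N t) ⟨le_of_lt hl, hr⟩
        exact Or.inl (mem_iUnion.2 ⟨stmt10N t,
          ⟨σ ((2:ℝ)^(stmt10N t + 1) * t - 1),
            ⟨_, stmt10_affine_mem ⟨le_of_lt hl, hr⟩, rfl⟩, hval.symm⟩⟩)
    · rintro z (hz | hz)
      · rw [mem_iUnion] at hz
        obtain ⟨n, _, ⟨x, hx, rfl⟩, rfl⟩ := hz
        have hp : (0:ℝ) < 2^(n+1) := by positivity
        refine ⟨(x+1)/2^(n+1), ?_, ?_⟩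
        · constructor
          · have := hx.1
            positivity
          · rw [div_le_one hp]
            have h2 : (2:ℝ) ≤ 2^(n+1) := by
              calc (2:ℝ) = 2^1 := (pow_one 2).symm
              _ ≤ 2^(n+1) := pow_le_pow_right₀ one_le_two (by omega)
            linarith [hx.2]
        · have hmem : (x+1)/2^(n+1) ∈ Icc ((2:ℝ)^(n+1))⁻¹ ((2:ℝ)^n)⁻¹ := by
            constructor
            · rw [inv_eq_one_div]
              gcongr
              linarith [hx.1]
            · rw [div_le_iff₀ hp]
              have h2 : ((2:ℝ)^n)⁻¹ * 2^(n+1) = 2 := by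
                rw [pow_succ]; field_simp
              rw [h2]
              linarith [hx.2]
          rw [stmt10Tau_eqOn h0 h1 n hmem]
          congr 1
          field_simp
          simp
      · rw [mem_singleton_iff] at hz
        rw [hz]
        exact ⟨0, by norm_num, htau0⟩
  -- variation
  have hpieceLR : ∀ n : ℕ, ((2:ℝ)^(n+1))⁻¹ ≤ ((2:ℝ)^n)⁻¹ :=
    fun n => inv_anti₀ (by positivity) (pow_le_pow_right₀ one_le_two (by omega))
  have hR1 : ∀ n : ℕ, ((2:ℝ)^n)⁻¹ ≤ 1 := by
    intro n
    rw [← inv_one]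
    exact inv_anti₀ one_pos (one_le_pow₀ one_le_two)
  have hvar_piece_full : ∀ n : ℕ,
      eVariationOn (stmt10Tau c σ) (Icc ((2:ℝ)^(n+1))⁻¹ ((2:ℝ)^n)⁻¹)
        ≤ ENNReal.ofReal (c^n * ℓ) := by
    intro n
    have h := stmt10_var_piece h0 h1 hc0 n (left_mem_Icc.2 (hpieceLR n))
    rw [show (2:ℝ)^(n+1) * ((2:ℝ)^(n+1))⁻¹ - 1 = 0 by field_simp; norm_num] at h
    rw [hlen] at h
    rwa [← ENNReal.ofReal_mul (pow_nonneg hc0.le n)] at h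
  have hvar_tail : ∀ n : ℕ, eVariationOn (stmt10Tau c σ) (Icc ((2:ℝ)^n)⁻¹ 1)
      ≤ ENNReal.ofReal (ℓ * (1 - c^n) / (1-c)) := by
    intro n
    induction n with
    | zero =>
      have : eVariationOn (stmt10Tau c σ) (Icc ((2:ℝ)^0)⁻¹ 1) = 0 := by
        apply eVariationOn.subsingleton
        norm_num [Set.Icc_self]
      simp [this]
    | succ n ih =>
      have hsplit := eVariationOn.Icc_add_Icc (stmt10Tau c σ)
        (a := ((2:ℝ)^(n+1))⁻¹) (b := ((2:ℝ)^n)⁻¹) (c := 1)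
        (hpieceLR n) (hR1 n) (mem_univ _) (s := univ)
      simp only [univ_inter] at hsplit
      rw [← hsplit]
      calc eVariationOn (stmt10Tau c σ) (Icc ((2:ℝ)^(n+1))⁻¹ ((2:ℝ)^n)⁻¹)
            + eVariationOn (stmt10Tau c σ) (Icc ((2:ℝ)^n)⁻¹ 1)
          ≤ ENNReal.ofReal (c^n * ℓ) + ENNReal.ofReal (ℓ * (1 - c^n) / (1-c)) :=
            add_le_add (hvar_piece_full n) ih
        _ = ENNReal.ofReal (c^n * ℓ + ℓ * (1 - c^n) / (1-c)) := by
            rw [ENNReal.ofReal_add (mul_nonneg (pow_nonneg hc0.le n) hℓ0)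
              (div_nonneg (mul_nonneg hℓ0 (by nlinarith [pow_le_one₀ (a := c) (n := n) hc0.le hc1.le]))
                h1c.le)]
        _ = ENNReal.ofReal (ℓ * (1 - c^(n+1)) / (1-c)) := by
            congr 1
            field_simp
            ring
  have hkey : ∀ t : ℝ, 0 < t → t ≤ 1 →
      edist (stmt10Tau c σ t) 0 + eVariationOn (stmt10Tau c σ) (Icc t 1)
        ≤ ENNReal.ofReal (ℓ / (1-c)) := by
    intro t ht0 ht1
    obtain ⟨hl, hr⟩ := stmt10N_mem ht0 ht1
    set n := stmt10N t with hn
    set s := (2:ℝ)^(n+1) * t - 1 with hs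
    have hsmem : s ∈ Icc (0:ℝ) 1 := stmt10_affine_mem ⟨le_of_lt hl, hr⟩
    have hsσ := eVariationOn.Icc_add_Icc σ (a := (0:ℝ)) (b := s) (c := 1)
      hsmem.1 hsmem.2 (mem_univ _) (s := univ)
    simp only [univ_inter] at hsσ
    have hsτ := eVariationOn.Icc_add_Icc (stmt10Tau c σ)
      (a := t) (b := ((2:ℝ)^n)⁻¹) (c := 1) hr (hR1 n) (mem_univ _) (s := univ)
    simp only [univ_inter] at hsτ
    have htauval : stmt10Tau c σ t = (c:ℂ)^n * σ s := stmt10Tau_eqOn h0 h1 n ⟨le_of_lt hl, hr⟩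
    have hedist : edist (stmt10Tau c σ t) 0
        ≤ ENNReal.ofReal (c^n) * (ENNReal.ofReal (c*‖a‖) + eVariationOn σ (Icc 0 s)) := by
      rw [htauval]
      have e1 : edist ((c:ℂ)^n * σ s) 0 = ENNReal.ofReal (c^n) * ENNReal.ofReal ‖σ s‖ := by
        rw [edist_dist, dist_zero_right, norm_mul, norm_pow, Complex.norm_real,
          Real.norm_eq_abs, abs_of_pos hc0, ENNReal.ofReal_mul (pow_nonneg hc0.le n)]
      rw [e1]
      apply mul_le_mul_right
      have hd : ‖σ s‖ ≤ c*‖a‖ + dist (σ s) (σ 0) := by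
        have h2 : ‖σ s‖ ≤ ‖σ 0‖ + ‖σ s - σ 0‖ := by
          calc ‖σ s‖ = ‖σ 0 + (σ s - σ 0)‖ := by congr 1; ring
          _ ≤ ‖σ 0‖ + ‖σ s - σ 0‖ := norm_add_le _ _
        rw [h0norm] at h2
        rwa [dist_eq_norm]
      calc ENNReal.ofReal ‖σ s‖
          ≤ ENNReal.ofReal (c*‖a‖ + dist (σ s) (σ 0)) := ENNReal.ofReal_le_ofReal hd
        _ = ENNReal.ofReal (c*‖a‖) + ENNReal.ofReal (dist (σ s) (σ 0)) :=
            ENNReal.ofReal_add (by positivity) dist_nonneg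
        _ ≤ ENNReal.ofReal (c*‖a‖) + eVariationOn σ (Icc 0 s) := by
            apply add_le_add_right
            rw [← edist_dist]
            exact eVariationOn.edist_le σ ⟨hsmem.1, le_rfl⟩ ⟨le_rfl, hsmem.1⟩
    have hmid : eVariationOn (stmt10Tau c σ) (Icc t ((2:ℝ)^n)⁻¹)
        ≤ ENNReal.ofReal (c^n) * eVariationOn σ (Icc s 1) :=
      stmt10_var_piece h0 h1 hc0 n ⟨le_of_lt hl, hr⟩
    calc edist (stmt10Tau c σ t) 0 + eVariationOn (stmt10Tau c σ) (Icc t 1)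
        = edist (stmt10Tau c σ t) 0 + (eVariationOn (stmt10Tau c σ) (Icc t ((2:ℝ)^n)⁻¹)
            + eVariationOn (stmt10Tau c σ) (Icc ((2:ℝ)^n)⁻¹ 1)) := by rw [hsτ]
      _ ≤ (ENNReal.ofReal (c^n) * (ENNReal.ofReal (c*‖a‖) + eVariationOn σ (Icc 0 s)))
            + (ENNReal.ofReal (c^n) * eVariationOn σ (Icc s 1)
              + ENNReal.ofReal (ℓ * (1 - c^n) / (1-c))) :=
          add_le_add hedist (add_le_add hmid (hvar_tail n))
      _ = ENNReal.ofReal (c^n) * (ENNReal.ofReal (c*‖a‖)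
            + (eVariationOn σ (Icc 0 s) + eVariationOn σ (Icc s 1)))
            + ENNReal.ofReal (ℓ * (1 - c^n) / (1-c)) := by ring
      _ = ENNReal.ofReal (c^n) * (ENNReal.ofReal (c*‖a‖) + ENNReal.ofReal ℓ)
            + ENNReal.ofReal (ℓ * (1 - c^n) / (1-c)) := by rw [hsσ, hlen]
      _ = ENNReal.ofReal (c^n * (c*‖a‖ + ℓ) + ℓ * (1 - c^n) / (1-c)) := by
          rw [← ENNReal.ofReal_add (by positivity) hℓ0]
          rw [← ENNReal.ofReal_mul (pow_nonneg hc0.le n)]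
          rw [← ENNReal.ofReal_add (mul_nonneg (pow_nonneg hc0.le n) (by positivity))
            (div_nonneg (mul_nonneg hℓ0 (by nlinarith [pow_le_one₀ (a := c) (n := n) hc0.le hc1.le])) h1c.le)]
      _ ≤ ENNReal.ofReal (ℓ / (1-c)) := by
          apply ENNReal.ofReal_le_ofReal
          have hcn1 : c^n ≤ 1 := pow_le_one₀ hc0.le hc1.le
          have hmul := mul_le_mul_of_nonneg_left hnorm_a (pow_nonneg hc0.le (n+1))
          rw [le_div_iff₀ h1c]
          have hexp : (c^n * (c*‖a‖+ℓ) + ℓ*(1-c^n)/(1-c)) * (1-c)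
              = c^(n+1)*‖a‖*(1-c) + c^n*ℓ*(1-c) + ℓ*(1-c^n) := by
            field_simp
            ring
          rw [hexp]
          nlinarith [hmul, pow_succ c n, pow_nonneg hc0.le n, pow_nonneg hc0.le (n+1)]
  have hvar_total : eVariationOn (stmt10Tau c σ) (Icc (0:ℝ) 1) ≤ ENNReal.ofReal (ℓ / (1-c)) := by
    refine iSup_le ?_
    rintro ⟨m, u, hu, us⟩
    dsimp only
    rcases le_or_gt (u m) 0 with hm | hm
    · have hz : ∀ i ∈ Finset.range m, edist (stmt10Tau c σ (u (i+1))) (stmt10Tau c σ (u i)) = 0 := by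
        intro i hi
        rw [Finset.mem_range] at hi
        have e1 : u i = 0 := le_antisymm (le_trans (hu (by omega : i ≤ m)) hm) (us i).1
        have e2 : u (i+1) = 0 := le_antisymm (le_trans (hu (by omega : i+1 ≤ m)) hm) (us (i+1)).1
        rw [e1, e2, edist_self]
      rw [Finset.sum_congr rfl hz]
      simp
    · have hex : ∃ j, 0 < u j := ⟨m, hm⟩
      have hjpos : 0 < u (Nat.find hex) := Nat.find_spec hex
      set j := Nat.find hex with hj
      have hzero : ∀ i, i < j → u i = 0 := fun i hi =>
        le_antisymm (not_lt.1 (Nat.find_min hex hi)) (us i).1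
      have hjm : j ≤ m := by
        by_contra hcon
        push_neg at hcon
        rw [hzero m hcon] at hm
        exact lt_irrefl 0 hm
      have hsum : ∑ i ∈ Finset.range m, edist (stmt10Tau c σ (u (i+1))) (stmt10Tau c σ (u i))
          = (∑ i ∈ Finset.range j, edist (stmt10Tau c σ (u (i+1))) (stmt10Tau c σ (u i)))
            + ∑ i ∈ Finset.Ico j m, edist (stmt10Tau c σ (u (i+1))) (stmt10Tau c σ (u i)) := by
        rw [Finset.range_eq_Ico, ← Finset.sum_Ico_consecutive _ (Nat.zero_le j) hjm, Finset.range_eq_Ico]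
      have hfirst : ∑ i ∈ Finset.range j, edist (stmt10Tau c σ (u (i+1))) (stmt10Tau c σ (u i))
          ≤ edist (stmt10Tau c σ (u j)) 0 := by
        rcases Nat.eq_zero_or_pos j with hj0 | hj0
        · simp [hj0]
        · have e1 : ∑ i ∈ Finset.range j, edist (stmt10Tau c σ (u (i+1))) (stmt10Tau c σ (u i))
              = edist (stmt10Tau c σ (u ((j-1)+1))) (stmt10Tau c σ (u (j-1))) := by
            apply Finset.sum_eq_single_of_mem
            · exact Finset.mem_range.2 (by omega)
            · intro i hi hne
              rw [Finset.mem_range] at hi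
              rw [hzero i (by omega), hzero (i+1) (by omega), edist_self]
          rw [e1, Nat.sub_add_cancel hj0, hzero (j-1) (by omega), htau0]
      have hsecond : ∑ i ∈ Finset.Ico j m, edist (stmt10Tau c σ (u (i+1))) (stmt10Tau c σ (u i))
          ≤ eVariationOn (stmt10Tau c σ) (Icc (u j) 1) := by
        rw [Finset.sum_Ico_eq_sum_range]
        exact eVariationOn.sum_le (f := stmt10Tau c σ) (n := m - j) (u := fun i => u (j + i))
          (fun x y hxy => hu (by omega)) (fun i => ⟨hu (Nat.le_add_right j i), (us (j+i)).2⟩)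
      rw [hsum]
      calc (∑ i ∈ Finset.range j, edist (stmt10Tau c σ (u (i+1))) (stmt10Tau c σ (u i)))
            + ∑ i ∈ Finset.Ico j m, edist (stmt10Tau c σ (u (i+1))) (stmt10Tau c σ (u i))
          ≤ edist (stmt10Tau c σ (u j)) 0 + eVariationOn (stmt10Tau c σ) (Icc (u j) 1) :=
            add_le_add hfirst hsecond
        _ ≤ ENNReal.ofReal (ℓ / (1-c)) := hkey (u j) hjpos (us j).2
  refine ⟨?_, ?_, Or.inr rfl, ?_, stmt10Tau c σ, hconttau, htau0, htau1, himg, hvar_total⟩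
  · rw [← himg]
    exact isCompact_Icc.image_of_continuousOn hconttau
  · rw [← himg]
    have hC : IsConnected (Icc (0:ℝ) 1) := ⟨⟨0, by norm_num⟩, isPreconnected_Icc⟩
    exact hC.image _ hconttau
  · exact Or.inl (mem_iUnion.2 ⟨0, ⟨a, ⟨1, by norm_num, h1⟩, by simp⟩⟩)
end
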